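/- Suppose there exist binary linear codes with parameters [n,k,d_1] and [n,k,d_2]. Then (a) there exists a binary LCP of codes with parameters [n+1,k,d_1,d_2], and (b) there exists a binary LCP of codes (C_1,C_2) of length n with dim C_1 = k, dim C_2 = n−k, C_1 + C_2 = F_2^n, the minimum distance of C_1 at least d_1 − 1, and the minimum distance of C_2^⊥ at least d_2 − 1. -/

import Mathlib

open scoped BigOperators

/-- The Euclidean dual of a linear code `C ⊆ F^ι`. -/
def dualCode {F : Type*} [Field F] {ι : Type*} [Fintype ι]
    (C : Submodule F (ι → F)) : Submodule F (ι → F) where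
  carrier := {b | ∀ c ∈ C, ∑ i, b i * c i = 0}
  zero_mem' := by intro c hc; simp
  add_mem' := by
    intro x y hx hy c hc
    simp only [Set.mem_setOf_eq, Pi.add_apply, add_mul, Finset.sum_add_distrib,
      hx c hc, hy c hc, add_zero]
  smul_mem' := by
    intro r x hx c hc
    simp only [Set.mem_setOf_eq, Pi.smul_apply, smul_eq_mul, mul_assoc,
      ← Finset.mul_sum, hx c hc, mul_zero]

/-- The (linear) code `C` has minimum distance `d`. -/
def hasMinDist {F : Type*} [Field F] [DecidableEq F] {ι : Type*} [Fintype ι]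
    (C : Submodule F (ι → F)) (d : ℕ) : Prop :=
  (∃ c ∈ C, c ≠ 0 ∧ hammingNorm c = d) ∧ ∀ c ∈ C, c ≠ 0 → d ≤ hammingNorm c

namespace LCPAux

variable {N : ℕ}

abbrev F2 := ZMod 2

/-! ### The dot product -/

def phi (b c : Fin N → F2) : F2 := ∑ i, b i * c i

lemma mem_dualCode {C : Submodule F2 (Fin N → F2)} {b : Fin N → F2} :
    b ∈ dualCode C ↔ ∀ c ∈ C, phi b c = 0 := Iff.rfl

lemma phi_comm (b c : Fin N → F2) : phi b c = phi c b :=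
  Finset.sum_congr rfl fun i _ => mul_comm _ _

lemma phi_add_right (a b c : Fin N → F2) : phi a (b + c) = phi a b + phi a c := by
  simp [phi, mul_add, Finset.sum_add_distrib]

lemma phi_add_left (a b c : Fin N → F2) : phi (a + b) c = phi a c + phi b c := by
  simp [phi, add_mul, Finset.sum_add_distrib]

lemma phi_smul_right (r : F2) (a c : Fin N → F2) : phi a (r • c) = r * phi a c := by
  simp only [phi, Pi.smul_apply, smul_eq_mul, Finset.mul_sum]
  exact Finset.sum_congr rfl fun i _ => by ring

lemma phi_single_right (a : Fin N → F2) (j : Fin N) (r : F2) :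
    phi a (Pi.single j r) = a j * r := by
  rw [phi, Finset.sum_eq_single j]
  · simp
  · intro b _ hb; simp [Pi.single_eq_of_ne hb]
  · simp

lemma phi_single_left (a : Fin N → F2) (j : Fin N) (r : F2) :
    phi (Pi.single j r) a = r * a j := by
  rw [phi_comm, phi_single_right, mul_comm]

/-! ### F2 facts -/

lemma F2_add_self (x : F2) : x + x = 0 := by revert x; decide
lemma F2_eq_one {x : F2} (h : x ≠ 0) : x = 1 := by revert x h; decide
lemma F2_cases (x : F2) : x = 0 ∨ x = 1 := by revert x; decide
lemma F2_add_eq_one {x y : F2} (h : x ≠ y) : x + y = 1 := by revert x y h; decide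
lemma F2_sub_eq_zero {x y : F2} (h : x + y = 0) : x - y = 0 := by revert x y h; decide

/-! ### The dot product as a linear equivalence onto the dual space -/

noncomputable def phiMap : (Fin N → F2) →ₗ[F2] Module.Dual F2 (Fin N → F2) where
  toFun b :=
    { toFun := fun c => phi b c
      map_add' := fun x y => phi_add_right b x y
      map_smul' := fun r x => by simp [phi_smul_right] }
  map_add' x y := by ext c; simp [phi_add_left]
  map_smul' r x := by
    refine LinearMap.ext fun c => ?_
    show phi (r • x) c = r * phi x c
    rw [phi_comm, phi_smul_right, phi_comm]

lemma phiMap_apply (b c : Fin N → F2) : phiMap b c = phi b c := rfl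

lemma phiMap_bijective : Function.Bijective (phiMap (N := N)) := by
  constructor
  · rw [injective_iff_map_eq_zero]
    intro b hb
    funext i
    have := congrArg (fun f => f (Pi.single (M := fun _ : Fin N => F2) i 1)) hb
    simpa [phiMap_apply, phi_single_right] using this
  · intro f
    refine ⟨fun i => f (Pi.single (M := fun _ : Fin N => F2) i 1), ?_⟩
    apply LinearMap.pi_ext'
    intro i
    apply LinearMap.ext
    intro r
    simp only [LinearMap.comp_apply, LinearMap.single_apply]
    rw [phiMap_apply]
    have hsm : (Pi.single (M := fun _ : Fin N => F2) i r)
        = r • (Pi.single (M := fun _ : Fin N => F2) i 1) := by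
      funext t
      by_cases ht : t = i
      · subst ht; simp
      · simp [Pi.single_eq_of_ne ht]
    rw [hsm, phi_smul_right, map_smul, phi_single_right]
    simp [mul_comm]

noncomputable def phiEquiv : (Fin N → F2) ≃ₗ[F2] Module.Dual F2 (Fin N → F2) :=
  LinearEquiv.ofBijective phiMap phiMap_bijective

lemma dualCode_eq_comap (C : Submodule F2 (Fin N → F2)) :
    dualCode C = (C.dualAnnihilator).comap (phiEquiv (N := N) : (Fin N → F2) →ₗ[F2] _) := by
  ext b
  simp only [mem_dualCode, Submodule.mem_comap, Submodule.mem_dualAnnihilator]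
  rfl

lemma finrank_pi_N : Module.finrank F2 (Fin N → F2) = N := by
  rw [Module.finrank_pi]; simp

lemma finrank_le_N (C : Submodule F2 (Fin N → F2)) : Module.finrank F2 C ≤ N := by
  have := Submodule.finrank_le C; rwa [finrank_pi_N] at this

lemma finrank_dualCode (C : Submodule F2 (Fin N → F2)) :
    Module.finrank F2 (dualCode C) = N - Module.finrank F2 C := by
  have h1 := finrank_pi_N (N := N)
  have h2 := Submodule.finrank_quotient_add_finrank C
  have h3 : Module.finrank F2 C.dualAnnihilator
      = Module.finrank F2 ((Fin N → F2) ⧸ C) :=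
    (LinearEquiv.finrank_eq (Subspace.quotEquivAnnihilator C)).symm
  have h4 : Module.finrank F2 (dualCode C) = Module.finrank F2 C.dualAnnihilator := by
    rw [dualCode_eq_comap, Submodule.comap_equiv_eq_map_symm]
    exact LinearEquiv.finrank_map_eq _ _
  have h5 := finrank_le_N C
  omega

lemma le_dualCode_dualCode (C : Submodule F2 (Fin N → F2)) :
    C ≤ dualCode (dualCode C) := by
  intro c hc b hb
  show phi c b = 0
  rw [phi_comm]
  exact hb c hc

lemma dualCode_dualCode (C : Submodule F2 (Fin N → F2)) :
    dualCode (dualCode C) = C := by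
  refine (Submodule.eq_of_le_of_finrank_le (le_dualCode_dualCode C) ?_).symm
  rw [finrank_dualCode, finrank_dualCode]
  have h5 := finrank_le_N C
  omega

lemma dualCode_sup (P Q : Submodule F2 (Fin N → F2)) :
    dualCode (P ⊔ Q) = dualCode P ⊓ dualCode Q := by
  ext b
  simp only [Submodule.mem_inf, mem_dualCode]
  constructor
  · intro h
    exact ⟨fun c hc => h c (Submodule.mem_sup_left hc),
      fun c hc => h c (Submodule.mem_sup_right hc)⟩
  · rintro ⟨h1, h2⟩ c hc
    rcases Submodule.mem_sup.mp hc with ⟨p, hp, q, hq, rfl⟩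
    rw [phi_add_right, h1 p hp, h2 q hq, add_zero]

/-- symmetry of the defect -/
lemma finrank_inf_dualCode_symm (U W : Submodule F2 (Fin N → F2))
    (h : Module.finrank F2 U = Module.finrank F2 W) :
    Module.finrank F2 (U ⊓ dualCode W : Submodule F2 (Fin N → F2))
      = Module.finrank F2 (W ⊓ dualCode U : Submodule F2 (Fin N → F2)) := by
  have h1 := finrank_pi_N (N := N)
  have hU := finrank_le_N U
  have hsum := Submodule.finrank_sup_add_finrank_inf_eq U (dualCode W)
  have hdW : Module.finrank F2 (dualCode W) = N - Module.finrank F2 W := finrank_dualCode W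
  have hsupdual : dualCode (U ⊔ dualCode W) = dualCode U ⊓ W := by
    rw [dualCode_sup, dualCode_dualCode]
  have h6 : Module.finrank F2 (dualCode (U ⊔ dualCode W))
      = N - Module.finrank F2 (U ⊔ dualCode W : Submodule F2 (Fin N → F2)) :=
    finrank_dualCode _
  rw [hsupdual] at h6
  have h7 := finrank_le_N (U ⊔ dualCode W)
  have h8 : Module.finrank F2 (dualCode U ⊓ W : Submodule F2 (Fin N → F2))
      = Module.finrank F2 (W ⊓ dualCode U : Submodule F2 (Fin N → F2)) := by rw [inf_comm]
  have h9 : Module.finrank F2 (W ⊓ dualCode U : Submodule F2 (Fin N → F2))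
      ≤ Module.finrank F2 W := Submodule.finrank_mono inf_le_left
  have h10 : Module.finrank F2 (U ⊓ dualCode W : Submodule F2 (Fin N → F2))
      ≤ Module.finrank F2 U := Submodule.finrank_mono inf_le_left
  omega

/-! ### Permutations -/

noncomputable def pe (σ : Equiv.Perm (Fin N)) : (Fin N → F2) ≃ₗ[F2] (Fin N → F2) :=
  LinearEquiv.funCongrLeft F2 F2 σ

lemma pe_apply (σ : Equiv.Perm (Fin N)) (v : Fin N → F2) : pe σ v = v ∘ σ := rfl

lemma map_pe_map_pe (τ σ : Equiv.Perm (Fin N)) (S : Submodule F2 (Fin N → F2)) :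
    Submodule.map (pe τ : (Fin N → F2) →ₗ[F2] (Fin N → F2))
      (Submodule.map (pe σ : (Fin N → F2) →ₗ[F2] (Fin N → F2)) S)
    = Submodule.map (pe (τ.trans σ) : (Fin N → F2) →ₗ[F2] (Fin N → F2)) S := by
  have hc : ((pe τ : (Fin N → F2) →ₗ[F2] (Fin N → F2)).comp
      (pe σ : (Fin N → F2) →ₗ[F2] (Fin N → F2)))
      = (pe (τ.trans σ) : (Fin N → F2) →ₗ[F2] (Fin N → F2)) := rfl
  rw [← hc]
  exact (Submodule.map_comp _ _ S).symm

lemma hammingNorm_comp_perm (σ : Equiv.Perm (Fin N)) (v : Fin N → F2) :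
    hammingNorm (v ∘ σ) = hammingNorm v := by
  unfold hammingNorm
  apply Finset.card_bij (fun i _ => σ i)
  · intro a ha
    simp only [Finset.mem_filter, Finset.mem_univ, true_and] at ha ⊢
    exact ha
  · intro a _ b _ h
    exact σ.injective h
  · intro b hb
    refine ⟨σ.symm b, ?_, by simp⟩
    simp only [Finset.mem_filter, Finset.mem_univ, true_and, Function.comp_apply,
      Equiv.apply_symm_apply] at hb ⊢
    exact hb

lemma comp_swap_eq (c : Fin N → F2) (i j : Fin N) :
    c ∘ (Equiv.swap i j) = c + (c i + c j) • (Pi.single (M := fun _ : Fin N => F2) i 1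
      + Pi.single (M := fun _ : Fin N => F2) j 1) := by
  have key1 : ∀ a b s1 s2 : F2, s1 = 1 → s2 = 0 → b = a + (a + b) * (s1 + s2) := by decide
  have key2 : ∀ a b s1 s2 : F2, s1 = 0 → s2 = 1 → a = b + (a + b) * (s1 + s2) := by decide
  have key3 : ∀ x a s1 s2 : F2, s1 = 0 → s2 = 0 → x = x + a * (s1 + s2) := by decide
  funext t
  show c (Equiv.swap i j t) = c t + (c i + c j) * (Pi.single (M := fun _ : Fin N => F2) i 1 t
      + Pi.single (M := fun _ : Fin N => F2) j 1 t)
  by_cases hti : t = i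
  · subst hti
    by_cases hij : t = j
    · subst hij
      rw [Equiv.swap_self]
      simp only [Equiv.refl_apply]
      have key4 : ∀ x s : F2, s = 1 → x = x + (x + x) * (s + s) := by decide
      exact key4 (c t) _ (Pi.single_eq_same t 1)
    · rw [Equiv.swap_apply_left]
      exact key1 (c t) (c j) _ _ (Pi.single_eq_same t 1) (Pi.single_eq_of_ne hij 1)
  · by_cases htj : t = j
    · subst htj
      rw [Equiv.swap_apply_right]
      exact key2 (c i) (c t) _ _ (Pi.single_eq_of_ne hti 1) (Pi.single_eq_same t 1)
    · rw [Equiv.swap_apply_of_ne_of_ne hti htj]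
      exact key3 (c t) (c i + c j) _ _ (Pi.single_eq_of_ne hti 1) (Pi.single_eq_of_ne htj 1)

lemma phi_comp_swap (a c : Fin N → F2) (i j : Fin N) :
    phi a (c ∘ (Equiv.swap i j)) = phi a c + (a i + a j) * (c i + c j) := by
  rw [comp_swap_eq c i j, phi_add_right, phi_smul_right, phi_add_right,
    phi_single_right, phi_single_right, mul_one, mul_one, mul_comm]

/-! ### The descent step -/

lemma step (A B : Submodule F2 (Fin N → F2)) (i j : Fin N)
    (x : Fin N → F2) (hxA : x ∈ A) (hxd : x ∈ dualCode B) (hxij : x i ≠ x j)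
    (y : Fin N → F2) (hyB : y ∈ B) (hyd : y ∈ dualCode A) (hyij : y i ≠ y j) :
    Module.finrank F2
      (A ⊓ dualCode (Submodule.map
        (pe (Equiv.swap i j) : (Fin N → F2) →ₗ[F2] (Fin N → F2)) B) :
        Submodule F2 (Fin N → F2))
    < Module.finrank F2 (A ⊓ dualCode B : Submodule F2 (Fin N → F2)) := by
  set L : (Fin N → F2) →ₗ[F2] F2 :=
    (LinearMap.proj (R := F2) (φ := fun _ : Fin N => F2) i)
      - (LinearMap.proj (R := F2) (φ := fun _ : Fin N => F2) j) with hL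
  have hLapp : ∀ v : Fin N → F2, L v = v i - v j := by
    intro v; simp [hL, LinearMap.sub_apply]
  have hle : A ⊓ dualCode (Submodule.map
      (pe (Equiv.swap i j) : (Fin N → F2) →ₗ[F2] (Fin N → F2)) B)
      ≤ (A ⊓ dualCode B) ⊓ LinearMap.ker L := by
    rintro a ha
    obtain ⟨haA, had⟩ := Submodule.mem_inf.mp ha
    have key : ∀ c ∈ B, phi a c + (a i + a j) * (c i + c j) = 0 := by
      intro c hc
      have hmem : (pe (Equiv.swap i j) : (Fin N → F2) →ₗ[F2] (Fin N → F2)) c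
          ∈ Submodule.map (pe (Equiv.swap i j) : (Fin N → F2) →ₗ[F2] (Fin N → F2)) B :=
        Submodule.mem_map_of_mem hc
      have h0 := (mem_dualCode.mp had) _ hmem
      rw [show ((pe (Equiv.swap i j) : (Fin N → F2) →ₗ[F2] (Fin N → F2)) c)
          = c ∘ (Equiv.swap i j) from rfl] at h0
      rwa [phi_comp_swap] at h0
    have hay : phi a y = 0 := by rw [phi_comm]; exact (mem_dualCode.mp hyd) a haA
    have h2 : (a i + a j) * (y i + y j) = 0 := by
      have := key y hyB; rwa [hay, zero_add] at this
    have haij : a i + a j = 0 := by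
      rwa [F2_add_eq_one hyij, mul_one] at h2
    have hadB : a ∈ dualCode B := by
      intro c hc
      have := key c hc
      rwa [haij, zero_mul, add_zero] at this
    refine Submodule.mem_inf.mpr ⟨Submodule.mem_inf.mpr ⟨haA, hadB⟩, ?_⟩
    rw [LinearMap.mem_ker, hLapp]
    exact F2_sub_eq_zero haij
  have hlt : ((A ⊓ dualCode B) ⊓ LinearMap.ker L : Submodule F2 (Fin N → F2))
      < A ⊓ dualCode B := by
    refine lt_of_le_of_ne inf_le_left fun he => ?_
    have hx : x ∈ A ⊓ dualCode B := Submodule.mem_inf.mpr ⟨hxA, hxd⟩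
    rw [← he] at hx
    have := (Submodule.mem_inf.mp hx).2
    rw [LinearMap.mem_ker, hLapp] at this
    exact sub_ne_zero_of_ne hxij this
  exact lt_of_le_of_lt (Submodule.finrank_mono hle) (Submodule.finrank_lt_finrank_of_lt hlt)

/-! ### Covering by two equivalence relations -/

lemma cover_total {ι : Type*} (P Q : ι → ι → Prop)
    (hPs : ∀ {i j}, P i j → P j i) (hPt : ∀ {i j l}, P i j → P j l → P i l)
    (hQs : ∀ {i j}, Q i j → Q j i) (hQt : ∀ {i j l}, Q i j → Q j l → Q i l)
    (h : ∀ i j, P i j ∨ Q i j) : (∀ i j, P i j) ∨ (∀ i j, Q i j) := by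
  by_cases hp : ∀ i j, P i j
  · exact Or.inl hp
  · right
    push_neg at hp
    obtain ⟨a, b, hab⟩ := hp
    have qab : Q a b := (h a b).resolve_left hab
    have key : ∀ c, Q c a ∨ Q c b := by
      intro c
      rcases h c a with h1 | h1
      · rcases h c b with h2 | h2
        · exact absurd (hPt (hPs h1) h2) hab
        · exact Or.inr h2
      · exact Or.inl h1
    intro i j
    rcases key i with hi | hi <;> rcases key j with hj | hj
    · exact hQt hi (hQs hj)
    · exact hQt hi (hQt qab (hQs hj))
    · exact hQt hi (hQt (hQs qab) (hQs hj))
    · exact hQt hi (hQs hj)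

/-! ### Existence of a good permutation -/

lemma exists_good_perm (A B₀ : Submodule F2 (Fin N → F2)) :
    ∃ σ : Equiv.Perm (Fin N), ∀ i j : Fin N,
      (∀ x ∈ (A ⊓ dualCode (Submodule.map
          (pe σ : (Fin N → F2) →ₗ[F2] (Fin N → F2)) B₀) :
          Submodule F2 (Fin N → F2)), x i = x j) ∨
      (∀ y ∈ ((Submodule.map (pe σ : (Fin N → F2) →ₗ[F2] (Fin N → F2)) B₀)
          ⊓ dualCode A : Submodule F2 (Fin N → F2)), y i = y j) := by
  obtain ⟨σ, -, hmin⟩ := Finset.exists_min_image Finset.univ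
    (fun σ : Equiv.Perm (Fin N) => Module.finrank F2
      (A ⊓ dualCode (Submodule.map (pe σ : (Fin N → F2) →ₗ[F2] (Fin N → F2)) B₀) :
        Submodule F2 (Fin N → F2)))
    ⟨1, Finset.mem_univ 1⟩
  refine ⟨σ, fun i j => ?_⟩
  by_contra hcon
  push_neg at hcon
  obtain ⟨⟨x, hx, hxij⟩, ⟨y, hy, hyij⟩⟩ := hcon
  obtain ⟨hxA, hxd⟩ := Submodule.mem_inf.mp hx
  obtain ⟨hyB, hyd⟩ := Submodule.mem_inf.mp hy
  have hstep := step A (Submodule.map (pe σ : (Fin N → F2) →ₗ[F2] (Fin N → F2)) B₀)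
    i j x hxA hxd hxij y hyB hyd hyij
  rw [map_pe_map_pe] at hstep
  exact absurd (hmin _ (Finset.mem_univ ((Equiv.swap i j).trans σ))) (not_le.mpr hstep)

/-! KEY ALTERNATIVE -/

lemma key_alternative (A B₀ : Submodule F2 (Fin N → F2))
    (hk : Module.finrank F2 A = Module.finrank F2 B₀) :
    ∃ σ : Equiv.Perm (Fin N),
      (A ⊓ dualCode (Submodule.map (pe σ : (Fin N → F2) →ₗ[F2] (Fin N → F2)) B₀) = ⊥) ∨
      (∃ x₀ y₀ : Fin N → F2,
        x₀ ∈ (A ⊓ dualCode (Submodule.map (pe σ : (Fin N → F2) →ₗ[F2] (Fin N → F2)) B₀) :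
          Submodule F2 (Fin N → F2)) ∧ x₀ ≠ 0 ∧
        y₀ ∈ ((Submodule.map (pe σ : (Fin N → F2) →ₗ[F2] (Fin N → F2)) B₀) ⊓ dualCode A :
          Submodule F2 (Fin N → F2)) ∧ y₀ ≠ 0 ∧
        ((∀ x ∈ (A ⊓ dualCode (Submodule.map (pe σ : (Fin N → F2) →ₗ[F2] (Fin N → F2)) B₀) :
            Submodule F2 (Fin N → F2)), ∀ i j, x i = x j) ∨
         (∀ y ∈ ((Submodule.map (pe σ : (Fin N → F2) →ₗ[F2] (Fin N → F2)) B₀) ⊓ dualCode A :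
            Submodule F2 (Fin N → F2)), ∀ i j, y i = y j))) := by
  obtain ⟨σ, hgood⟩ := exists_good_perm A B₀
  set Bσ := Submodule.map (pe σ : (Fin N → F2) →ₗ[F2] (Fin N → F2)) B₀ with hBσ
  refine ⟨σ, ?_⟩
  by_cases hbot : A ⊓ dualCode Bσ = ⊥
  · exact Or.inl hbot
  · right
    obtain ⟨x₀, hx₀, hx₀ne⟩ := (Submodule.ne_bot_iff _).mp hbot
    have hkB : Module.finrank F2 A = Module.finrank F2 Bσ := by
      rw [hk, hBσ]; exact (LinearEquiv.finrank_map_eq _ _).symm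
    have hfr : Module.finrank F2 (A ⊓ dualCode Bσ : Submodule F2 (Fin N → F2))
        = Module.finrank F2 (Bσ ⊓ dualCode A : Submodule F2 (Fin N → F2)) :=
      finrank_inf_dualCode_symm A Bσ hkB
    have hWBne : (Bσ ⊓ dualCode A : Submodule F2 (Fin N → F2)) ≠ ⊥ := by
      intro hWB
      apply hbot
      rw [← Submodule.finrank_eq_zero (S := (A ⊓ dualCode Bσ : Submodule F2 (Fin N → F2)))]
      rw [hfr, hWB]
      exact finrank_bot F2 _
    obtain ⟨y₀, hy₀, hy₀ne⟩ := (Submodule.ne_bot_iff _).mp hWBne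
    refine ⟨x₀, y₀, hx₀, hx₀ne, hy₀, hy₀ne, ?_⟩
    have hcov := cover_total
      (fun i j => ∀ x ∈ (A ⊓ dualCode Bσ : Submodule F2 (Fin N → F2)), x i = x j)
      (fun i j => ∀ y ∈ (Bσ ⊓ dualCode A : Submodule F2 (Fin N → F2)), y i = y j)
      (fun h x hx => (h x hx).symm) (fun h1 h2 x hx => (h1 x hx).trans (h2 x hx))
      (fun h y hy => (h y hy).symm) (fun h1 h2 y hy => (h1 y hy).trans (h2 y hy))
      hgood
    rcases hcov with h | h
    · exact Or.inl (fun x hx i j => h i j x hx)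
    · exact Or.inr (fun y hy i j => h i j y hy)

/-! ### Transvections -/

noncomputable def tv (j t : Fin N) : (Fin N → F2) →ₗ[F2] (Fin N → F2) :=
  LinearMap.id + (LinearMap.proj (R := F2) (φ := fun _ : Fin N => F2) t).smulRight
    (Pi.single (M := fun _ : Fin N => F2) j 1)

lemma tv_apply (j t : Fin N) (c : Fin N → F2) :
    tv j t c = c + c t • Pi.single (M := fun _ : Fin N => F2) j 1 := rfl

lemma tv_apply_ne {j : Fin N} (t : Fin N) {s : Fin N} (hs : s ≠ j) (c : Fin N → F2) :
    tv j t c s = c s := by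
  rw [tv_apply]
  simp [Pi.single_eq_of_ne hs]

lemma tv_involutive {j t : Fin N} (hjt : j ≠ t) : Function.Involutive (tv j t) := by
  intro c
  rw [tv_apply, tv_apply]
  have h1 : (c + c t • Pi.single (M := fun _ : Fin N => F2) j 1) t = c t := by
    simp [Pi.single_eq_of_ne (Ne.symm hjt)]
  rw [h1, add_assoc, ← add_smul, F2_add_self, zero_smul, add_zero]

noncomputable def tvEquiv (j t : Fin N) (hjt : j ≠ t) :
    (Fin N → F2) ≃ₗ[F2] (Fin N → F2) :=
  LinearEquiv.ofInvolutive (tv j t) (tv_involutive hjt)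

lemma tvEquiv_coe (j t : Fin N) (hjt : j ≠ t) :
    ((tvEquiv j t hjt) : (Fin N → F2) →ₗ[F2] (Fin N → F2)) = tv j t := rfl

lemma phi_tv (j t : Fin N) (a c : Fin N → F2) :
    phi a (tv j t c) = phi a c + c t * (a j) := by
  rw [tv_apply, phi_add_right, phi_smul_right, phi_single_right, mul_one]

lemma hammingNorm_le_succ {c c' : Fin N → F2} {j : Fin N}
    (h : ∀ s, s ≠ j → c' s = c s) : hammingNorm c ≤ hammingNorm c' + 1 := by
  unfold hammingNorm
  have hsub : (Finset.univ.filter fun s => c s ≠ 0)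
      ⊆ insert j (Finset.univ.filter fun s => c' s ≠ 0) := by
    intro s hs
    simp only [Finset.mem_filter, Finset.mem_univ, true_and] at hs
    by_cases hsj : s = j
    · exact Finset.mem_insert.mpr (Or.inl hsj)
    · refine Finset.mem_insert.mpr (Or.inr ?_)
      simp only [Finset.mem_filter, Finset.mem_univ, true_and]
      rw [h s hsj]
      exact hs
  calc (Finset.univ.filter fun s => c s ≠ 0).card
      ≤ (insert j (Finset.univ.filter fun s => c' s ≠ 0)).card := Finset.card_le_card hsub
    _ ≤ (Finset.univ.filter fun s => c' s ≠ 0).card + 1 := Finset.card_insert_le _ _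

/-! ### Part (b) construction -/

lemma part_b_core (A B₀ : Submodule F2 (Fin N → F2))
    (hk : Module.finrank F2 A = Module.finrank F2 B₀) :
    ∃ B' : Submodule F2 (Fin N → F2),
      A ⊓ dualCode B' = ⊥ ∧ Module.finrank F2 B' = Module.finrank F2 B₀ ∧
      ∀ c' ∈ B', c' ≠ 0 → ∃ c ∈ B₀, c ≠ 0 ∧ hammingNorm c ≤ hammingNorm c' + 1 := by
  obtain ⟨σ, halt⟩ := key_alternative A B₀ hk
  set Bσ := Submodule.map (pe σ : (Fin N → F2) →ₗ[F2] (Fin N → F2)) B₀ with hBσdef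
  have hBσk : Module.finrank F2 Bσ = Module.finrank F2 B₀ := LinearEquiv.finrank_map_eq _ _
  have hmemBσ : ∀ c' ∈ Bσ, c' ≠ 0 → ∃ c ∈ B₀, c ≠ 0 ∧ hammingNorm c = hammingNorm c' := by
    rintro c' hc' hc'ne
    obtain ⟨c, hc, rfl⟩ := Submodule.mem_map.mp hc'
    refine ⟨c, hc, ?_, ?_⟩
    · intro h0; apply hc'ne; rw [h0]; exact map_zero _
    · rw [show ((pe σ : (Fin N → F2) →ₗ[F2] (Fin N → F2)) c) = c ∘ σ from rfl]
      exact (hammingNorm_comp_perm σ c).symm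
  rcases halt with hbot | ⟨x₀, y₀, hx₀, hx₀ne, hy₀, hy₀ne, hconst⟩
  · refine ⟨Bσ, hbot, hBσk, ?_⟩
    intro c' hc' hc'ne
    obtain ⟨c, hc, hcne, hcnorm⟩ := hmemBσ c' hc' hc'ne
    exact ⟨c, hc, hcne, by omega⟩
  · obtain ⟨hx₀A, hx₀d⟩ := Submodule.mem_inf.mp hx₀
    obtain ⟨hy₀B, hy₀d⟩ := Submodule.mem_inf.mp hy₀
    have hphixy : phi x₀ y₀ = 0 := (mem_dualCode.mp hx₀d) y₀ hy₀B
    -- extract j t and the characterization of W_A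
    have hjt_exists : ∃ j t : Fin N, j ≠ t ∧ x₀ j ≠ 0 ∧ y₀ t ≠ 0 ∧
        (∀ a ∈ (A ⊓ dualCode Bσ : Submodule F2 (Fin N → F2)), a = 0 ∨ a = x₀) := by
      rcases hconst with hAc | hBc
      · -- W_A is constant
        obtain ⟨t₀, ht₀⟩ := Function.ne_iff.mp hx₀ne
        have hx1 : ∀ s, x₀ s = 1 := fun s => by
          rw [hAc x₀ hx₀ s t₀]; exact F2_eq_one ht₀
        have hsum : ∑ i, y₀ i = 0 := by
          calc ∑ i, y₀ i = ∑ i, x₀ i * y₀ i :=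
                Finset.sum_congr rfl fun i _ => by rw [hx1 i, one_mul]
            _ = 0 := hphixy
        obtain ⟨t, ht⟩ := Function.ne_iff.mp hy₀ne
        have h2 : ∃ t', t' ≠ t ∧ y₀ t' ≠ 0 := by
          by_contra hno
          push_neg at hno
          have : ∑ i, y₀ i = y₀ t := Finset.sum_eq_single t
            (fun b _ hb => hno b hb) (fun h => absurd (Finset.mem_univ t) h)
          rw [hsum] at this
          exact ht this.symm
        obtain ⟨j, hjt, _⟩ := h2
        refine ⟨j, t, hjt, by rw [hx1 j]; exact one_ne_zero, ht, ?_⟩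
        intro a ha
        by_cases ha0 : a = 0
        · exact Or.inl ha0
        · right
          obtain ⟨s₀, hs₀⟩ := Function.ne_iff.mp ha0
          funext s
          rw [hAc a ha s s₀, hx1 s]
          exact F2_eq_one hs₀
      · -- W_B is constant
        obtain ⟨t₀, ht₀⟩ := Function.ne_iff.mp hy₀ne
        have hy1 : ∀ s, y₀ s = 1 := fun s => by
          rw [hBc y₀ hy₀ s t₀]; exact F2_eq_one ht₀
        have hsum : ∑ i, x₀ i = 0 := by
          calc ∑ i, x₀ i = ∑ i, x₀ i * y₀ i :=
                Finset.sum_congr rfl fun i _ => by rw [hy1 i, mul_one]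
            _ = 0 := hphixy
        obtain ⟨j, hj⟩ := Function.ne_iff.mp hx₀ne
        have h2 : ∃ j', j' ≠ j ∧ x₀ j' ≠ 0 := by
          by_contra hno
          push_neg at hno
          have : ∑ i, x₀ i = x₀ j := Finset.sum_eq_single j
            (fun b _ hb => hno b hb) (fun h => absurd (Finset.mem_univ j) h)
          rw [hsum] at this
          exact hj this.symm
        obtain ⟨j', hj'j, _⟩ := h2
        have hone : (fun _ : Fin N => (1 : F2)) ≠ 0 := by
          intro h
          have := congrFun h j
          simp at this
        have hWBle : (Bσ ⊓ dualCode A : Submodule F2 (Fin N → F2))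
            ≤ Submodule.span F2 {(fun _ : Fin N => (1 : F2))} := by
          intro y hy
          by_cases hy0 : y = 0
          · rw [hy0]; exact Submodule.zero_mem _
          · obtain ⟨s₀, hs₀⟩ := Function.ne_iff.mp hy0
            have : y = fun _ : Fin N => (1 : F2) := by
              funext s
              rw [hBc y hy s s₀]
              exact F2_eq_one hs₀
            rw [this]
            exact Submodule.mem_span_singleton_self _
        have hWBfr : Module.finrank F2 (Bσ ⊓ dualCode A : Submodule F2 (Fin N → F2)) ≤ 1 := by
          have := Submodule.finrank_mono hWBle
          rwa [finrank_span_singleton hone] at this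
        have hkB : Module.finrank F2 A = Module.finrank F2 Bσ := by
          rw [hk, hBσdef]; exact (LinearEquiv.finrank_map_eq _ _).symm
        have hWAfr : Module.finrank F2 (A ⊓ dualCode Bσ : Submodule F2 (Fin N → F2)) ≤ 1 := by
          rw [finrank_inf_dualCode_symm A Bσ hkB]
          exact hWBfr
        have hspanle : Submodule.span F2 {x₀} ≤ (A ⊓ dualCode Bσ : Submodule F2 (Fin N → F2)) := by
          rw [Submodule.span_le, Set.singleton_subset_iff]
          exact hx₀
        have hWAeq : Submodule.span F2 {x₀} = (A ⊓ dualCode Bσ : Submodule F2 (Fin N → F2)) :=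
          Submodule.eq_of_le_of_finrank_le hspanle
            (by rw [finrank_span_singleton hx₀ne]; exact hWAfr)
        refine ⟨j, j', Ne.symm hj'j, hj, by rw [hy1 j']; exact one_ne_zero, ?_⟩
        intro a ha
        rw [← hWAeq] at ha
        obtain ⟨r, rfl⟩ := Submodule.mem_span_singleton.mp ha
        rcases F2_cases r with hr | hr
        · left; rw [hr, zero_smul]
        · right; rw [hr, one_smul]
    obtain ⟨j, t, hjt, hxj, hyt, hW⟩ := hjt_exists
    refine ⟨Submodule.map ((tvEquiv j t hjt) : (Fin N → F2) →ₗ[F2] (Fin N → F2)) Bσ,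
      ?_, ?_, ?_⟩
    · -- disjointness
      rw [Submodule.eq_bot_iff]
      rintro a ha
      obtain ⟨haA, had⟩ := Submodule.mem_inf.mp ha
      have key : ∀ c ∈ Bσ, phi a c + c t * a j = 0 := by
        intro c hc
        have hmem : ((tvEquiv j t hjt) : (Fin N → F2) →ₗ[F2] (Fin N → F2)) c
            ∈ Submodule.map ((tvEquiv j t hjt) : (Fin N → F2) →ₗ[F2] (Fin N → F2)) Bσ :=
          Submodule.mem_map_of_mem hc
        have h0 := (mem_dualCode.mp had) _ hmem
        rw [tvEquiv_coe] at h0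
        rwa [phi_tv] at h0
      have h1 : phi a y₀ = 0 := by
        rw [phi_comm]; exact (mem_dualCode.mp hy₀d) a haA
      have h2 : y₀ t * a j = 0 := by
        have := key y₀ hy₀B; rwa [h1, zero_add] at this
      have haj : a j = 0 := by
        rwa [F2_eq_one hyt, one_mul] at h2
      have hadB : a ∈ dualCode Bσ := by
        intro c hc
        have := key c hc
        rwa [haj, mul_zero, add_zero] at this
      rcases hW a (Submodule.mem_inf.mpr ⟨haA, hadB⟩) with h | h
      · exact h
      · exact absurd (h ▸ haj) hxj
    · rw [LinearEquiv.finrank_map_eq]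
      exact hBσk
    · rintro c' hc' hc'ne
      obtain ⟨c, hc, rfl⟩ := Submodule.mem_map.mp hc'
      have hcne : c ≠ 0 := by
        intro h0
        apply hc'ne
        rw [h0]
        exact map_zero _
      obtain ⟨c₀, hc₀, hc₀ne, hc₀norm⟩ := hmemBσ c hc hcne
      refine ⟨c₀, hc₀, hc₀ne, ?_⟩
      have hnn : hammingNorm c
          ≤ hammingNorm (((tvEquiv j t hjt) : (Fin N → F2) →ₗ[F2] (Fin N → F2)) c) + 1 := by
        apply hammingNorm_le_succ (j := j)
        intro s hs
        rw [tvEquiv_coe]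
        exact tv_apply_ne t hs c
      omega

/-! ### Disjointness for codes avoiding the all-ones vector -/

lemma exists_perm_disjoint (A B₀ : Submodule F2 (Fin N → F2))
    (hk : Module.finrank F2 A = Module.finrank F2 B₀)
    (hA : ∀ x ∈ A, x ≠ 0 → ∃ t, x t = 0)
    (hB : ∀ y ∈ B₀, y ≠ 0 → ∃ t, y t = 0) :
    ∃ σ : Equiv.Perm (Fin N),
      A ⊓ dualCode (Submodule.map (pe σ : (Fin N → F2) →ₗ[F2] (Fin N → F2)) B₀) = ⊥ := by
  obtain ⟨σ, halt⟩ := key_alternative A B₀ hk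
  refine ⟨σ, ?_⟩
  rcases halt with hbot | ⟨x₀, y₀, hx₀, hx₀ne, hy₀, hy₀ne, hconst⟩
  · exact hbot
  · exfalso
    rcases hconst with hAc | hBc
    · obtain ⟨t₀, ht₀⟩ := Function.ne_iff.mp hx₀ne
      obtain ⟨t, ht⟩ := hA x₀ (Submodule.mem_inf.mp hx₀).1 hx₀ne
      apply ht₀
      rw [hAc x₀ hx₀ t₀ t, ht]
      rfl
    · obtain ⟨t₀, ht₀⟩ := Function.ne_iff.mp hy₀ne
      have hy₀B := (Submodule.mem_inf.mp hy₀).1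
      obtain ⟨b, hb, hbeq⟩ := Submodule.mem_map.mp hy₀B
      have hbne : b ≠ 0 := by
        intro h0
        apply hy₀ne
        rw [← hbeq, h0]
        exact map_zero _
      obtain ⟨t, ht⟩ := hB b hb hbne
      apply ht₀
      have hcoord : y₀ (σ.symm t) = b t := by
        rw [← hbeq]
        show (b ∘ σ) (σ.symm t) = b t
        simp
      rw [hBc y₀ hy₀ t₀ (σ.symm t), hcoord, ht]
      rfl

/-! ### The one-coordinate extension -/

variable {n : ℕ}

noncomputable def emb : (Fin n → F2) →ₗ[F2] (Fin (n + 1) → F2) where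
  toFun x := Fin.snoc x 0
  map_add' x y := by
    funext t
    refine Fin.lastCases ?_ (fun i => ?_) t
    · simp [Fin.snoc_last]
    · simp [Fin.snoc_castSucc]
  map_smul' r x := by
    funext t
    refine Fin.lastCases ?_ (fun i => ?_) t
    · simp [Fin.snoc_last]
    · simp [Fin.snoc_castSucc]

lemma emb_apply (x : Fin n → F2) : emb x = Fin.snoc x 0 := rfl

lemma emb_last (x : Fin n → F2) : emb x (Fin.last n) = 0 := by
  rw [emb_apply, Fin.snoc_last]

lemma emb_injective : Function.Injective (emb (n := n)) := by
  intro x y h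
  funext s
  have := congrFun h s.castSucc
  rwa [emb_apply, emb_apply, Fin.snoc_castSucc, Fin.snoc_castSucc] at this

lemma hammingNorm_emb (x : Fin n → F2) : hammingNorm (emb x) = hammingNorm x := by
  unfold hammingNorm
  refine (Finset.card_bij (fun (i : Fin n) _ => i.castSucc) ?_ ?_ ?_).symm
  · intro i hi
    simp only [Finset.mem_filter, Finset.mem_univ, true_and] at hi ⊢
    rw [emb_apply, Fin.snoc_castSucc]
    exact hi
  · intro a _ b _ h
    exact Fin.castSucc_injective n h
  · intro b hb
    simp only [Finset.mem_filter, Finset.mem_univ, true_and] at hb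
    have hbl : b ≠ Fin.last n := by
      intro h
      apply hb
      rw [h, emb_last]
    obtain ⟨i, rfl⟩ := (Fin.exists_castSucc_eq.mpr hbl)
    refine ⟨i, ?_, rfl⟩
    simp only [Finset.mem_filter, Finset.mem_univ, true_and]
    rwa [emb_apply, Fin.snoc_castSucc] at hb

lemma finrank_map_emb (D : Submodule F2 (Fin n → F2)) :
    Module.finrank F2 (Submodule.map (emb (n := n)) D) = Module.finrank F2 D :=
  (LinearEquiv.finrank_eq (Submodule.equivMapOfInjective _ emb_injective D)).symm

lemma hasMinDist_map_emb {D : Submodule F2 (Fin n → F2)} {d : ℕ} (h : hasMinDist D d) :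
    hasMinDist (Submodule.map (emb (n := n)) D) d := by
  obtain ⟨⟨c, hc, hcne, hcnorm⟩, hlb⟩ := h
  constructor
  · refine ⟨emb c, Submodule.mem_map_of_mem hc, ?_, by rw [hammingNorm_emb]; exact hcnorm⟩
    intro h0
    apply hcne
    apply emb_injective
    rw [h0, map_zero]
  · rintro c' hc' hc'ne
    obtain ⟨c₀, hc₀, rfl⟩ := Submodule.mem_map.mp hc'
    rw [hammingNorm_emb]
    apply hlb c₀ hc₀
    intro h0
    apply hc'ne
    rw [h0, map_zero]

lemma hasMinDist_map_pe {C : Submodule F2 (Fin N → F2)} {d : ℕ} (σ : Equiv.Perm (Fin N))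
    (h : hasMinDist C d) :
    hasMinDist (Submodule.map (pe σ : (Fin N → F2) →ₗ[F2] (Fin N → F2)) C) d := by
  obtain ⟨⟨c, hc, hcne, hcnorm⟩, hlb⟩ := h
  have hnorm : ∀ v : Fin N → F2,
      hammingNorm ((pe σ : (Fin N → F2) →ₗ[F2] (Fin N → F2)) v) = hammingNorm v := by
    intro v
    exact hammingNorm_comp_perm σ v
  constructor
  · refine ⟨(pe σ : (Fin N → F2) →ₗ[F2] (Fin N → F2)) c, Submodule.mem_map_of_mem hc, ?_,
      by rw [hnorm]; exact hcnorm⟩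
    intro h0
    exact hcne ((pe σ).injective (show (pe σ) c = (pe σ) 0 by rw [map_zero]; exact h0))
  · rintro c' hc' hc'ne
    obtain ⟨c₀, hc₀, rfl⟩ := Submodule.mem_map.mp hc'
    rw [hnorm]
    apply hlb c₀ hc₀
    intro h0
    apply hc'ne
    rw [h0, map_zero]

/-! ### Sup from trivial intersection -/

lemma sup_eq_top_of_inf_eq_bot (C₁ C₂ : Submodule F2 (Fin N → F2)) (hinf : C₁ ⊓ C₂ = ⊥)
    (hsum : Module.finrank F2 C₁ + Module.finrank F2 C₂ = N) : C₁ ⊔ C₂ = ⊤ := by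
  apply Submodule.eq_top_of_finrank_eq
  have h := Submodule.finrank_sup_add_finrank_inf_eq C₁ C₂
  rw [hinf] at h
  have hb : Module.finrank F2 (⊥ : Submodule F2 (Fin N → F2)) = 0 := finrank_bot F2 _
  rw [finrank_pi_N]
  omega

end LCPAux


open LCPAux

/-- If binary codes with parameters `[n,k,d₁]` and `[n,k,d₂]` exist, then
(a) there is a binary LCP of codes with parameters `[n+1,k,d₁,d₂]`, and
(b) there is a binary LCP of codes `(C₁,C₂)` of length `n` with `dim C₁ = k`,
`dim C₂ = n-k`, `C₁ + C₂ = F_2^n`, minimum distance of `C₁` at least `d₁ - 1` and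
minimum distance of `C₂^⊥` at least `d₂ - 1`. -/
theorem exists_binary_lcp_of_codes {n k d₁ d₂ : ℕ}
    (D₁ D₂ : Submodule (ZMod 2) (Fin n → ZMod 2))
    (hD₁ : Module.finrank (ZMod 2) D₁ = k) (hD₂ : Module.finrank (ZMod 2) D₂ = k)
    (hd₁ : hasMinDist D₁ d₁) (hd₂ : hasMinDist D₂ d₂) :
    (∃ C₁ C₂ : Submodule (ZMod 2) (Fin (n + 1) → ZMod 2),
      Module.finrank (ZMod 2) C₁ = k ∧ Module.finrank (ZMod 2) C₂ = n + 1 - k ∧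
      C₁ ⊔ C₂ = ⊤ ∧ hasMinDist C₁ d₁ ∧ hasMinDist (dualCode C₂) d₂) ∧
    (∃ C₁ C₂ : Submodule (ZMod 2) (Fin n → ZMod 2),
      Module.finrank (ZMod 2) C₁ = k ∧ Module.finrank (ZMod 2) C₂ = n - k ∧
      C₁ ⊔ C₂ = ⊤ ∧ (∀ c ∈ C₁, c ≠ 0 → d₁ - 1 ≤ hammingNorm c) ∧
      (∀ c ∈ dualCode C₂, c ≠ 0 → d₂ - 1 ≤ hammingNorm c)) := by
  constructor
  · -- part (a)
    set A : Submodule F2 (Fin (n + 1) → F2) := Submodule.map (emb (n := n)) D₁ with hA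
    set B₀ : Submodule F2 (Fin (n + 1) → F2) := Submodule.map (emb (n := n)) D₂ with hB₀
    have hkA : Module.finrank F2 A = k := by rw [hA, finrank_map_emb]; exact hD₁
    have hkB : Module.finrank F2 B₀ = k := by rw [hB₀, finrank_map_emb]; exact hD₂
    have hAz : ∀ x ∈ A, x ≠ 0 → ∃ t, x t = 0 := by
      rintro x hx -
      obtain ⟨x₀, _, rfl⟩ := Submodule.mem_map.mp hx
      exact ⟨Fin.last n, emb_last x₀⟩
    have hBz : ∀ y ∈ B₀, y ≠ 0 → ∃ t, y t = 0 := by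
      rintro y hy -
      obtain ⟨y₀, _, rfl⟩ := Submodule.mem_map.mp hy
      exact ⟨Fin.last n, emb_last y₀⟩
    obtain ⟨σ, hσ⟩ := exists_perm_disjoint A B₀ (hkA.trans hkB.symm) hAz hBz
    set Bσ : Submodule F2 (Fin (n + 1) → F2) :=
      Submodule.map (pe σ : (Fin (n + 1) → F2) →ₗ[F2] (Fin (n + 1) → F2)) B₀ with hBσ
    have hBσk : Module.finrank F2 Bσ = k := by
      rw [hBσ, LinearEquiv.finrank_map_eq]; exact hkB
    have hkle : k ≤ n + 1 := by
      have h1 : Module.finrank F2 A ≤ n + 1 := finrank_le_N A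
      omega
    refine ⟨A, dualCode Bσ, hkA, ?_, ?_, ?_, ?_⟩
    · rw [finrank_dualCode, hBσk]
    · apply sup_eq_top_of_inf_eq_bot _ _ hσ
      rw [hkA, finrank_dualCode, hBσk]
      omega
    · exact hasMinDist_map_emb hd₁
    · rw [dualCode_dualCode]
      exact hasMinDist_map_pe σ (hasMinDist_map_emb hd₂)
  · -- part (b)
    obtain ⟨B', hinf, hfr, hnorm⟩ := part_b_core D₁ D₂ (hD₁.trans hD₂.symm)
    have hkle : k ≤ n := by
      have h1 : Module.finrank (ZMod 2) D₁ ≤ n := finrank_le_N D₁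
      omega
    refine ⟨D₁, dualCode B', hD₁, ?_, ?_, ?_, ?_⟩
    · rw [finrank_dualCode, hfr, hD₂]
    · apply sup_eq_top_of_inf_eq_bot _ _ hinf
      rw [hD₁, finrank_dualCode, hfr, hD₂]
      omega
    · intro c hc hcne
      exact le_trans (Nat.sub_le d₁ 1) (hd₁.2 c hc hcne)
    · intro c hc hcne
      rw [dualCode_dualCode] at hc
      obtain ⟨c₀, hc₀, hc₀ne, hc₀n⟩ := hnorm c hc hcne
      have := hd₂.2 c₀ hc₀ hc₀ne
      omega
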